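/- For all real t with 0 < t ≤ 1.3, 3π·sin t + (5π − 12)·sin⁴t·(sin t − sin³t/3) − π·(sin t − sin³t/3 + sin⁵t/5) − 2πt > 0. -/

import Mathlib

open Real Set

lemma sin_ge_cubic {x : ℝ} (hx : 0 ≤ x) : x - x^3/6 ≤ sin x := by
  have mono : MonotoneOn (fun y : ℝ => sin y - (y - y^3/6)) (Ici 0) := by
    apply monotoneOn_of_deriv_nonneg (convex_Ici 0)
    · fun_prop
    · intro y hy; exact (((Real.differentiable_sin y).sub (by fun_prop)).differentiableWithinAt)
    · intro y hy
      have hd : HasDerivAt (fun y : ℝ => sin y - (y - y^3/6)) (cos y - (1 - 3*y^2/6)) y := by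
        have := (Real.hasDerivAt_sin y).sub
          ((hasDerivAt_id y).sub ((hasDerivAt_pow 3 y).div_const 6))
        exact this
      rw [hd.deriv]
      nlinarith [Real.one_sub_sq_div_two_le_cos (x := y)]
  have := mono (self_mem_Ici) hx hx
  simp at this; linarith [this]

lemma cos_le_quartic {x : ℝ} (hx : 0 ≤ x) : cos x ≤ 1 - x^2/2 + x^4/24 := by
  have mono : MonotoneOn (fun y : ℝ => (1 - y^2/2 + y^4/24) - cos y) (Ici 0) := by
    apply monotoneOn_of_deriv_nonneg (convex_Ici 0)
    · fun_prop
    · intro y hy; exact ((by fun_prop : Differentiable ℝ _) y).differentiableWithinAt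
    · intro y hy
      have hd : HasDerivAt (fun y : ℝ => (1 - y^2/2 + y^4/24) - cos y)
          (((0 - 2*y^1/2) + 4*y^3/24) - (-sin y)) y := by
        exact (((hasDerivAt_const y (1:ℝ)).sub ((hasDerivAt_pow 2 y).div_const 2)).add
          ((hasDerivAt_pow 4 y).div_const 24)).sub (Real.hasDerivAt_cos y)
      rw [hd.deriv]
      have := sin_ge_cubic (le_of_lt (lt_of_lt_of_le (by norm_num : (0:ℝ) < 1) (le_refl 1)))
      have h2 := sin_ge_cubic (interior_subset hy |>.out)
      simp only [pow_one]; nlinarith [sin_ge_cubic (show (0:ℝ) ≤ y from (interior_subset hy).out)]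
  have := mono (self_mem_Ici) hx hx
  simp at this; linarith [this]

lemma sin_le_quintic {x : ℝ} (hx : 0 ≤ x) : sin x ≤ x - x^3/6 + x^5/120 := by
  have mono : MonotoneOn (fun y : ℝ => (y - y^3/6 + y^5/120) - sin y) (Ici 0) := by
    apply monotoneOn_of_deriv_nonneg (convex_Ici 0)
    · fun_prop
    · intro y hy; exact ((by fun_prop : Differentiable ℝ _) y).differentiableWithinAt
    · intro y hy
      have hd : HasDerivAt (fun y : ℝ => (y - y^3/6 + y^5/120) - sin y)
          (((1 - 3*y^2/6) + 5*y^4/120) - cos y) y := by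
        exact (((hasDerivAt_id y).sub ((hasDerivAt_pow 3 y).div_const 6)).add
          ((hasDerivAt_pow 5 y).div_const 120)).sub (Real.hasDerivAt_sin y)
      rw [hd.deriv]
      nlinarith [cos_le_quartic (show (0:ℝ) ≤ y from (interior_subset hy).out)]
  have := mono (self_mem_Ici) hx hx
  simp at this; linarith [this]

lemma cos_ge_sextic {x : ℝ} (hx : 0 ≤ x) : 1 - x^2/2 + x^4/24 - x^6/720 ≤ cos x := by
  have mono : MonotoneOn (fun y : ℝ => cos y - (1 - y^2/2 + y^4/24 - y^6/720)) (Ici 0) := by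
    apply monotoneOn_of_deriv_nonneg (convex_Ici 0)
    · fun_prop
    · intro y hy; exact ((by fun_prop : Differentiable ℝ _) y).differentiableWithinAt
    · intro y hy
      have hd : HasDerivAt (fun y : ℝ => cos y - (1 - y^2/2 + y^4/24 - y^6/720))
          ((-sin y) - (((0 - 2*y^1/2) + 4*y^3/24) - 6*y^5/720)) y := by
        exact (Real.hasDerivAt_cos y).sub
          ((((hasDerivAt_const y (1:ℝ)).sub ((hasDerivAt_pow 2 y).div_const 2)).add
            ((hasDerivAt_pow 4 y).div_const 24)).sub ((hasDerivAt_pow 6 y).div_const 720))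
      rw [hd.deriv]
      simp only [pow_one]
      nlinarith [sin_le_quintic (show (0:ℝ) ≤ y from (interior_subset hy).out)]
  have := mono (self_mem_Ici) hx hx
  simp at this; linarith [this]

lemma sin_ge_septic {x : ℝ} (hx : 0 ≤ x) : x - x^3/6 + x^5/120 - x^7/5040 ≤ sin x := by
  have mono : MonotoneOn (fun y : ℝ => sin y - (y - y^3/6 + y^5/120 - y^7/5040)) (Ici 0) := by
    apply monotoneOn_of_deriv_nonneg (convex_Ici 0)
    · fun_prop
    · intro y hy; exact ((by fun_prop : Differentiable ℝ _) y).differentiableWithinAt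
    · intro y hy
      have hd : HasDerivAt (fun y : ℝ => sin y - (y - y^3/6 + y^5/120 - y^7/5040))
          (cos y - (((1 - 3*y^2/6) + 5*y^4/120) - 7*y^6/5040)) y := by
        exact (Real.hasDerivAt_sin y).sub
          ((((hasDerivAt_id y).sub ((hasDerivAt_pow 3 y).div_const 6)).add
            ((hasDerivAt_pow 5 y).div_const 120)).sub ((hasDerivAt_pow 7 y).div_const 5040))
      rw [hd.deriv]
      nlinarith [cos_ge_sextic (show (0:ℝ) ≤ y from (interior_subset hy).out)]
  have := mono (self_mem_Ici) hx hx
  simp at this; linarith [this]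

set_option maxHeartbeats 1000000

lemma Rneg (t : ℝ) (ht0 : 0 ≤ t) (hu : t^2 ≤ 1.69) :
    2*((t - t^3/6 + t^5/120 - t^7/5040) - t) + (t - t^3/6 + t^5/120 - t^7/5040)^3/3 ≤ 0 := by
  have g : ∀ k : ℕ, 0 ≤ t^k * (1.69 - t^2) := fun k => mul_nonneg (pow_nonneg ht0 k) (by linarith)
  have p : ∀ k : ℕ, 0 ≤ t^k := fun k => pow_nonneg ht0 k
  linarith [g 5, g 7, g 9, g 11, g 13, g 15, g 17, g 19, p 5, p 7, p 9, p 11, p 13, p 15, p 17, p 19, p 21]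

lemma Pfin (t : ℝ) (h1 : 0 < t) (hu : t^2 ≤ 1.69) :
    (0:ℝ) < 3.141593*(2*((t - t^3/6 + t^5/120 - t^7/5040) - t) + (t - t^3/6 + t^5/120 - t^7/5040)^3/3)
      + 19/10 * (t - t^3/6 + t^5/120 - t^7/5040)^5 := by
  have ht0 : 0 ≤ t := h1.le
  have g : ∀ k : ℕ, 0 ≤ t^k * (1.69 - t^2) := fun k => mul_nonneg (pow_nonneg ht0 k) (by linarith)
  have p : ∀ k : ℕ, 0 ≤ t^k := fun k => pow_nonneg ht0 k
  have q : ∀ k : ℕ, 0 ≤ t^k * (t^2 - 1.69)^2 := fun k => mul_nonneg (pow_nonneg ht0 k) (sq_nonneg _)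
  have t5 : 0 < t^5 := pow_pos h1 5
  linarith [q 5, q 9, g 5, g 7, g 9, g 11, g 13, g 15, g 17, g 19, g 21, g 23, g 25, g 27, g 29, g 31, g 33,
    p 5, p 7, p 9, p 11, p 13, p 15, p 17, p 19, p 21, p 23, p 25, p 27, p 29, p 31, p 33, p 35, t5]

lemma Lnonneg (t : ℝ) (ht0 : 0 ≤ t) (hu : t^2 ≤ 1.69) :
    0 ≤ t - t^3/6 + t^5/120 - t^7/5040 := by
  have g : ∀ k : ℕ, 0 ≤ t^k * (1.69 - t^2) := fun k => mul_nonneg (pow_nonneg ht0 k) (by linarith)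
  have p : ∀ k : ℕ, 0 ≤ t^k := fun k => pow_nonneg ht0 k
  linarith [g 1, g 3, g 5, p 1, p 3, p 5, p 7]

theorem stmt17 (t : ℝ) (h1 : 0 < t) (h2 : t ≤ 1.3) :
    3*π*sin t + (5*π - 12)*(sin t)^4*(sin t - (sin t)^3/3)
    - π*(sin t - (sin t)^3/3 + (sin t)^5/5) - 2*π*t > 0 := by
  have ht0 : (0:ℝ) ≤ t := h1.le
  have hu : t^2 ≤ 1.69 := by nlinarith
  have hpi1 : (3.141592:ℝ) < π := by have := Real.pi_gt_d6; linarith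
  have hpi2 : π < 3.141593 := by have := Real.pi_lt_d6; linarith
  obtain ⟨L, hLdef⟩ : ∃ L : ℝ, L = t - t^3/6 + t^5/120 - t^7/5040 := ⟨_, rfl⟩
  obtain ⟨s, hsdef⟩ : ∃ s : ℝ, s = sin t := ⟨_, rfl⟩
  rw [← hsdef]
  have hs1 : L ≤ s := by rw [hLdef, hsdef]; exact sin_ge_septic ht0
  have hs97 : s ≤ 0.97 := by
    have hs2 : s ≤ t - t^3/6 + t^5/120 := hsdef ▸ sin_le_quintic ht0
    nlinarith [mul_nonneg (mul_nonneg ht0 ht0) ht0, sq_nonneg (t-1.3), sq_nonneg t,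
      mul_nonneg (mul_nonneg (mul_nonneg ht0 ht0) ht0) ht0, sq_nonneg (t*(t-1.3)),
      mul_nonneg (mul_nonneg ht0 ht0) (sq_nonneg (t-1.3))]
  have hLpos : 0 ≤ L := hLdef ▸ Lnonneg t ht0 hu
  have hspos : 0 ≤ s := le_trans hLpos hs1
  have hcube : L^3 ≤ s^3 := pow_le_pow_left₀ hLpos hs1 3
  have hquint : L^5 ≤ s^5 := pow_le_pow_left₀ hLpos hs1 5
  have hbracket : (19:ℝ)/10 * s^5 ≤ (24*π/5 - 12)*s^5 - (5*π - 12)*s^7/3 := by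
    nlinarith [mul_nonneg (pow_nonneg hspos 5) (mul_nonneg (sub_nonneg.2 hs97) (by linarith : (0:ℝ) ≤ s + 0.97)),
      mul_nonneg (sub_nonneg.2 hpi1.le) (pow_nonneg hspos 5),
      mul_nonneg (sub_nonneg.2 hpi2.le) (pow_nonneg hspos 7),
      mul_nonneg (mul_nonneg (sub_nonneg.2 hpi1.le) (pow_nonneg hspos 5)) (mul_nonneg (sub_nonneg.2 hs97) (by linarith : (0:ℝ) ≤ s + 0.97))]
  have hmono : π*(2*(L-t) + L^3/3) ≤ π*(2*(s-t) + s^3/3) := by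
    have h1' := mul_nonneg Real.pi_pos.le (sub_nonneg.2 hs1)
    have h2' := mul_nonneg Real.pi_pos.le (sub_nonneg.2 hcube)
    nlinarith [h1', h2']
  have hRneg : 2*(L-t) + L^3/3 ≤ 0 := hLdef ▸ Rneg t ht0 hu
  have hpiR : 3.141593*(2*(L-t) + L^3/3) ≤ π*(2*(L-t) + L^3/3) := by
    nlinarith [mul_nonneg (sub_nonneg.2 hpi2.le) (neg_nonneg.2 hRneg)]
  have hfin : (0:ℝ) < 3.141593*(2*(L-t) + L^3/3) + 19/10 * L^5 := hLdef ▸ Pfin t h1 hu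
  have hexpand : 3*π*s + (5*π - 12)*s^4*(s - s^3/3) - π*(s - s^3/3 + s^5/5) - 2*π*t
      = π*(2*(s-t) + s^3/3) + ((24*π/5 - 12)*s^5 - (5*π - 12)*s^7/3) := by ring
  rw [hexpand]
  have h19 : (19:ℝ)/10 * L^5 ≤ 19/10 * s^5 := by linarith
  linarith [hbracket, hmono, hpiR, hfin, h19]
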